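/- Mixing Lemma: let A be a complete Heyting algebra, {u_i : i ∈ I} a family of A-names and {a_i : i ∈ I} ⊆ A, and let u be the mixture Σ_{i∈I} a_i·u_i. If a_i ⊓ a_j ≤ ‖u_i ≈ u_j‖ for all i, j ∈ I, then a_i ≤ ‖u_i ≈ u‖ for every i ∈ I. -/

import Mathlib

universe u

/-- The universe `V^A` of `A`-names over a complete Heyting algebra `A`:
an `A`-name is a function from a set (of previously constructed `A`-names)
into `A`, here encoded by an indexing type `ι`, a family `elts` of names and
the family `val` of their attached truth values. -/
inductive HName (A : Type u) : Type (u + 1) where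
  | mk (ι : Type u) (elts : ι → HName A) (val : ι → A)

namespace HName

variable {A : Type u}

/-- The indexing type of (the domain of) a name. -/
def ι : HName A → Type u
  | mk ι _ _ => ι

/-- The members of (the domain of) a name. -/
def elts : (u : HName A) → u.ι → HName A
  | mk _ e _ => e

/-- The values attached by a name to the members of its domain. -/
def val : (u : HName A) → u.ι → A
  | mk _ _ v => v

/-- Ordinal rank of a name (used for the recursive definition of truth values). -/
noncomputable def rank : HName A → Ordinal.{u}
  | mk _ e _ => Ordinal.lsub fun i => (e i).rank

theorem rank_lt {ι : Type u} (e : ι → HName A) (v : ι → A) (i : ι) :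
    (e i).rank < (mk ι e v).rank := Ordinal.lt_lsub _ i

variable [Order.Frame A]

/-- The truth value `‖u ≈ v‖` of equality of two names, defined by the recursion
`‖u ≈ v‖ = ⨅_{x ∈ dom u} (u(x) ⇨ ‖x ∈ v‖) ⊓ ⨅_{y ∈ dom v} (v(y) ⇨ ‖y ∈ u‖)`,
where `‖x ∈ v‖ = ⨆_{y ∈ dom v} (v(y) ⊓ ‖y ≈ x‖)` is inlined. -/
noncomputable def eqVal : HName A → HName A → A
  | mk ι e a, mk κ f b =>
      (⨅ i, a i ⇨ ⨆ j, b j ⊓ eqVal (f j) (e i)) ⊓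
      (⨅ j, b j ⇨ ⨆ i, a i ⊓ eqVal (e i) (f j))
termination_by u v => max u.rank v.rank
decreasing_by
  · exact max_lt (lt_max_of_lt_right (rank_lt f b j)) (lt_max_of_lt_left (rank_lt e a i))
  · exact max_lt (lt_max_of_lt_left (rank_lt e a i)) (lt_max_of_lt_right (rank_lt f b j))

/-- The truth value `‖u ∈ v‖ = ⨆_{x ∈ dom v} (v(x) ⊓ ‖x ≈ u‖)` of membership. -/
noncomputable def memVal (u v : HName A) : A :=
  ⨆ j : v.ι, v.val j ⊓ eqVal (v.elts j) u

end HName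


open HName in
/-- The mixture `Σ_{i∈I} a_i · u_i` of a family of names `u_i` with weights `a_i`:
its domain is the union of the domains of the `u_i`, and it assigns to a member
`x` the value `⨆_{i∈I} (a_i ⊓ ‖x ∈ u_i‖)`. -/
noncomputable def HName.mixture {A : Type u} [Order.Frame A] {I : Type u}
    (a : I → A) (w : I → HName A) : HName A :=
  HName.mk (Σ i : I, (w i).ι) (fun p => (w p.1).elts p.2)
    (fun p => ⨆ i : I, a i ⊓ HName.memVal ((w p.1).elts p.2) (w i))


namespace HName

variable {A : Type u} [Order.Frame A]

theorem rank_elts_lt : ∀ (u : HName A) (x : u.ι), (u.elts x).rank < u.rank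
  | mk ι e v, x => rank_lt e v x

theorem eqVal_def (u v : HName A) :
    eqVal u v = (⨅ i, u.val i ⇨ memVal (u.elts i) v) ⊓
      (⨅ j, v.val j ⇨ memVal (v.elts j) u) := by
  cases u; cases v; rw [eqVal]; rfl

theorem eqVal_symm (u v : HName A) : eqVal u v = eqVal v u := by
  rw [eqVal_def, eqVal_def v u, inf_comm]

theorem le_eqVal_refl : ∀ u : HName A, (⊤ : A) ≤ eqVal u u := by
  intro u
  induction u with
  | mk ι e a ih =>
    rw [eqVal_def]
    refine le_inf (le_iInf fun i => ?_) (le_iInf fun i => ?_) <;>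
    · rw [le_himp_iff]
      refine le_trans ?_ (le_iSup (fun j : ι => a j ⊓ eqVal (e j) (e i)) i)
      exact le_inf inf_le_right (le_top.trans (ih i))

theorem maxmin_lex {a a' c : Ordinal.{u}} (h : a' < a) :
    Prod.Lex (· < ·) (· < ·) (max a' c, min a' c) (max a c, min a c) := by
  rcases le_total a c with hac | hac
  · rw [max_eq_right (h.le.trans hac), max_eq_right hac, min_eq_left (h.le.trans hac),
      min_eq_left hac]
    exact Prod.Lex.right _ h
  · rcases le_or_gt a' c with h' | h'
    · rw [max_eq_right h', max_eq_left hac]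
      by_cases hca : c = a
      · subst hca; rw [min_eq_left h', min_self]; exact Prod.Lex.right _ h
      · exact Prod.Lex.left _ _ (lt_of_le_of_ne hac hca)
    · rw [max_eq_left h'.le, max_eq_left hac]
      exact Prod.Lex.left _ _ h

mutual

theorem eqVal_trans (u v w : HName A) : eqVal u v ⊓ eqVal v w ≤ eqVal u w := by
  rw [eqVal_def u w]
  refine le_inf (le_iInf fun x => le_himp_iff.2 ?_) (le_iInf fun z => le_himp_iff.2 ?_)
  · have h1 : eqVal u v ⊓ u.val x ≤ memVal (u.elts x) v := by
      rw [eqVal_def u v]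
      exact le_himp_iff.1 (inf_le_left.trans (iInf_le _ x))
    calc eqVal u v ⊓ eqVal v w ⊓ u.val x
        = eqVal v w ⊓ (eqVal u v ⊓ u.val x) := by
          rw [inf_comm (eqVal u v) (eqVal v w), inf_assoc]
      _ ≤ eqVal v w ⊓ memVal (u.elts x) v := inf_le_inf_left _ h1
      _ = eqVal w v ⊓ memVal (u.elts x) v := by rw [eqVal_symm]
      _ ≤ memVal (u.elts x) w := memVal_congr w v (u.elts x)
  · have h1 : eqVal v w ⊓ w.val z ≤ memVal (w.elts z) v := by
      rw [eqVal_def v w]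
      exact le_himp_iff.1 (inf_le_right.trans (iInf_le _ z))
    calc eqVal u v ⊓ eqVal v w ⊓ w.val z
        ≤ eqVal u v ⊓ (eqVal v w ⊓ w.val z) := by rw [inf_assoc]
      _ ≤ eqVal u v ⊓ memVal (w.elts z) v := inf_le_inf_left _ h1
      _ ≤ memVal (w.elts z) u := memVal_congr u v (w.elts z)
termination_by (max u.rank w.rank, min u.rank w.rank)
decreasing_by
  · rw [max_comm (rank w), min_comm (rank w)]
    exact maxmin_lex (rank_elts_lt u x)
  · rw [max_comm (rank u), min_comm (rank u), max_comm (rank u), min_comm (rank u)]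
    exact maxmin_lex (rank_elts_lt w z)

theorem memVal_congr (u v w : HName A) : eqVal u v ⊓ memVal w v ≤ memVal w u := by
  have : memVal w v = ⨆ y : v.ι, v.val y ⊓ eqVal (v.elts y) w := rfl
  rw [this, inf_iSup_eq]
  refine iSup_le fun y => ?_
  have h1 : eqVal u v ⊓ v.val y ≤ memVal (v.elts y) u := by
    rw [eqVal_def u v]
    exact le_himp_iff.1 (inf_le_right.trans (iInf_le _ y))
  have h2 : ∀ x : u.ι,
      (u.val x ⊓ eqVal (u.elts x) (v.elts y)) ⊓ eqVal (v.elts y) w ≤ memVal w u := by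
    intro x
    calc (u.val x ⊓ eqVal (u.elts x) (v.elts y)) ⊓ eqVal (v.elts y) w
        ≤ u.val x ⊓ eqVal (u.elts x) w := by
          rw [inf_assoc]
          exact inf_le_inf_left _ (eqVal_trans (u.elts x) (v.elts y) w)
      _ ≤ memVal w u := le_iSup (fun x : u.ι => u.val x ⊓ eqVal (u.elts x) w) x
  calc eqVal u v ⊓ (v.val y ⊓ eqVal (v.elts y) w)
      = (eqVal u v ⊓ v.val y) ⊓ eqVal (v.elts y) w := by rw [inf_assoc]
    _ ≤ memVal (v.elts y) u ⊓ eqVal (v.elts y) w := inf_le_inf_right _ h1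
    _ = (⨆ x : u.ι, u.val x ⊓ eqVal (u.elts x) (v.elts y)) ⊓ eqVal (v.elts y) w := rfl
    _ = ⨆ x : u.ι, (u.val x ⊓ eqVal (u.elts x) (v.elts y)) ⊓ eqVal (v.elts y) w :=
        iSup_inf_eq _ _
    _ ≤ memVal w u := iSup_le h2
termination_by (max u.rank w.rank, min u.rank w.rank)
decreasing_by
  · exact maxmin_lex (rank_elts_lt u x)

end

theorem val_le_memVal (u : HName A) (x : u.ι) : u.val x ≤ memVal (u.elts x) u := by
  refine le_trans ?_ (le_iSup (fun y : u.ι => u.val y ⊓ eqVal (u.elts y) (u.elts x)) x)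
  exact le_inf le_rfl (le_top.trans (le_eqVal_refl _))

end HName

open HName in
/-- Mixing Lemma: if `a_i ⊓ a_j ≤ ‖u_i ≈ u_j‖` for all `i, j ∈ I`, then
`a_i ≤ ‖u_i ≈ Σ_{j∈I} a_j · u_j‖` for every `i ∈ I`. -/
theorem mixing_lemma {A : Type u} [Order.Frame A] {I : Type u}
    (a : I → A) (w : I → HName A)
    (h : ∀ i j, a i ⊓ a j ≤ eqVal (w i) (w j)) :
    ∀ i, a i ≤ eqVal (w i) (mixture a w) := by
  intro i
  rw [eqVal_def]
  refine le_inf (le_iInf fun x => le_himp_iff.2 ?_) (le_iInf fun p => le_himp_iff.2 ?_)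
  · show a i ⊓ (w i).val x ≤ memVal ((w i).elts x) (mixture a w)
    refine le_trans ?_ (le_iSup
      (fun p : Σ j, (w j).ι =>
        (⨆ j, a j ⊓ memVal ((w p.1).elts p.2) (w j)) ⊓
          eqVal ((w p.1).elts p.2) ((w i).elts x)) ⟨i, x⟩)
    refine le_inf ?_ (le_top.trans (le_eqVal_refl _))
    refine le_trans ?_ (le_iSup (fun j => a j ⊓ memVal ((w i).elts x) (w j)) i)
    exact inf_le_inf_left _ (val_le_memVal (w i) x)
  · obtain ⟨j0, y⟩ := p
    show a i ⊓ (⨆ j, a j ⊓ memVal ((w j0).elts y) (w j)) ≤ memVal ((w j0).elts y) (w i)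
    rw [inf_iSup_eq]
    refine iSup_le fun j => ?_
    calc a i ⊓ (a j ⊓ memVal ((w j0).elts y) (w j))
        = (a i ⊓ a j) ⊓ memVal ((w j0).elts y) (w j) := by rw [inf_assoc]
      _ ≤ eqVal (w i) (w j) ⊓ memVal ((w j0).elts y) (w j) := inf_le_inf_right _ (h i j)
      _ ≤ memVal ((w j0).elts y) (w i) := memVal_congr (w i) (w j) _
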